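/- arXiv:2012.02823 — 7 statements merged into one kernel-verified Lean document; each statement's English description precedes it below -/
import Mathlib

section
/- Let g be a polynomial lying in the holomorphic subalgebra (generated by Z₀,…,Z₃ alone), and let f = b + Σ_α a_α·W_α be affine-linear in the W-variables, with b and all a_α in the holomorphic subalgebra. Then f ⋆ g = f·g − c·Σ_α a_α·(∂g/∂Z_α). In particular f ⋆ g is again of the form (element of the holomorphic subalgebra) + Σ_α (element of the holomorphic subalgebra)·W_α, i.e. affine-linear in the W-variables. (This is the second compatibility condition showing that the geometric quantization of twistor space admits a compatible deformation quantization.) -/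
open MvPolynomial

noncomputable section

/-- The polynomial ring in the holomorphic twistor coordinates `Z α` (indexed by `Sum.inl α`)
and the conjugate coordinates `W α` (indexed by `Sum.inr α`). -/
abbrev TwistorPoly : Type := MvPolynomial (Fin 4 ⊕ Fin 4) ℂ

/-- Partial derivative with respect to a variable, as a `ℂ`-linear endomorphism. -/
noncomputable def DOp (v : Fin 4 ⊕ Fin 4) : Module.End ℂ TwistorPoly :=
  (MvPolynomial.pderiv v).toLinearMap

/-- The iterated derivative `∂_Z^m = Π_α (∂/∂Z_α)^{m α}`. -/
noncomputable def dZ (m : Fin 4 →₀ ℕ) : Module.End ℂ TwistorPoly :=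
  DOp (Sum.inl 0) ^ m 0 * DOp (Sum.inl 1) ^ m 1 * DOp (Sum.inl 2) ^ m 2 * DOp (Sum.inl 3) ^ m 3

/-- The iterated derivative `∂_W^n = Π_α (∂/∂W_α)^{n α}`. -/
noncomputable def dW (n : Fin 4 →₀ ℕ) : Module.End ℂ TwistorPoly :=
  DOp (Sum.inr 0) ^ n 0 * DOp (Sum.inr 1) ^ n 1 * DOp (Sum.inr 2) ^ n 2 * DOp (Sum.inr 3) ^ n 3

/-- The Moyal coefficient `c^{|m|+|n|} (−1)^{|n|} / (m! n!)`. -/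
noncomputable def moyalCoeff (c : ℂ) (m n : Fin 4 →₀ ℕ) : ℂ :=
  c ^ ((∑ i : Fin 4, m i) + (∑ i : Fin 4, n i)) * (-1 : ℂ) ^ (∑ i : Fin 4, n i) /
    ((∏ i : Fin 4, (Nat.factorial (m i) : ℂ)) * (∏ i : Fin 4, (Nat.factorial (n i) : ℂ)))

/-- The Moyal star product associated to the constant symplectic form
`ω = Σ_α dZ_α ∧ dW_α`. -/
noncomputable def moyal (c : ℂ) (f g : TwistorPoly) : TwistorPoly :=
  ∑ᶠ p : (Fin 4 →₀ ℕ) × (Fin 4 →₀ ℕ),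
    moyalCoeff c p.1 p.2 • (dZ p.1 (dW p.2 f) * dW p.1 (dZ p.2 g))

/-- The holomorphic subalgebra, generated by the variables `Z_0, …, Z_3` alone. -/
noncomputable def holSub : Subalgebra ℂ TwistorPoly :=
  Algebra.adjoin ℂ (Set.range fun i : Fin 4 => (X (Sum.inl i) : TwistorPoly))

lemma DOp_apply (v : Fin 4 ⊕ Fin 4) (p : TwistorPoly) : DOp v p = pderiv v p := rfl

lemma pderiv_inr_hol (j : Fin 4) {h : TwistorPoly} (hh : h ∈ holSub) :
    pderiv (Sum.inr j) h = 0 := by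
  have hh' : h ∈ Algebra.adjoin ℂ (Set.range fun i : Fin 4 => (X (Sum.inl i) : TwistorPoly)) := hh
  clear hh
  induction hh' using Algebra.adjoin_induction with
  | mem x hx => obtain ⟨i, rfl⟩ := hx; exact pderiv_X_of_ne (by simp)
  | algebraMap r => simp [MvPolynomial.algebraMap_eq, pderiv_C]
  | add x y hx hy ihx ihy => simp [ihx, ihy]
  | mul x y hx hy ihx ihy => simp [pderiv_mul, ihx, ihy]

lemma pderiv_inl_hol (i : Fin 4) {h : TwistorPoly} (hh : h ∈ holSub) :
    pderiv (Sum.inl i) h ∈ holSub := by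
  have hh' : h ∈ Algebra.adjoin ℂ (Set.range fun i : Fin 4 => (X (Sum.inl i) : TwistorPoly)) := hh
  clear hh
  induction hh' using Algebra.adjoin_induction with
  | mem x hx =>
      obtain ⟨k, rfl⟩ := hx
      show pderiv (Sum.inl i) (X (Sum.inl k)) ∈ holSub
      by_cases hik : (Sum.inl k : Fin 4 ⊕ Fin 4) = Sum.inl i
      · rw [hik, pderiv_X_self]; exact one_mem _
      · rw [pderiv_X_of_ne hik]; exact zero_mem _
  | algebraMap r =>
      rw [MvPolynomial.algebraMap_eq, pderiv_C]; exact zero_mem _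
  | add x y hx hy ihx ihy =>
      rw [map_add]; exact add_mem ihx ihy
  | mul x y hx hy ihx ihy =>
      rw [pderiv_mul]; exact add_mem (mul_mem ihx hy) (mul_mem hx ihy)

lemma pow_inr_hol (j : Fin 4) (k : ℕ) (hk : k ≠ 0) {h : TwistorPoly} (hh : h ∈ holSub) :
    (DOp (Sum.inr j) ^ k) h = 0 := by
  obtain ⟨k, rfl⟩ := Nat.exists_eq_succ_of_ne_zero hk
  rw [pow_succ, Module.End.mul_apply, DOp_apply, pderiv_inr_hol j hh, map_zero]

lemma pow_inl_hol (i : Fin 4) (k : ℕ) : ∀ {h : TwistorPoly}, h ∈ holSub →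
    (DOp (Sum.inl i) ^ k) h ∈ holSub := by
  induction k with
  | zero => intro h hh; simpa using hh
  | succ k ih =>
      intro h hh
      rw [pow_succ, Module.End.mul_apply]
      exact ih (by rw [DOp_apply]; exact pderiv_inl_hol i hh)

lemma dZ_hol (m : Fin 4 →₀ ℕ) {h : TwistorPoly} (hh : h ∈ holSub) : dZ m h ∈ holSub := by
  simp only [dZ, Module.End.mul_apply]
  exact pow_inl_hol _ _ (pow_inl_hol _ _ (pow_inl_hol _ _ (pow_inl_hol _ _ hh)))

lemma dW_zero_apply (h : TwistorPoly) : dW 0 h = h := by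
  simp [dW]

lemma dZ_zero_apply (h : TwistorPoly) : dZ 0 h = h := by
  simp [dZ]

lemma dW_hol_ne {n : Fin 4 →₀ ℕ} (hn : n ≠ 0) {h : TwistorPoly} (hh : h ∈ holSub) :
    dW n h = 0 := by
  simp only [dW, Module.End.mul_apply]
  by_cases h3 : n 3 = 0
  · rw [h3, pow_zero, Module.End.one_apply]
    by_cases h2 : n 2 = 0
    · rw [h2, pow_zero, Module.End.one_apply]
      by_cases h1 : n 1 = 0
      · rw [h1, pow_zero, Module.End.one_apply]
        have h0 : n 0 ≠ 0 := by
          intro h0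
          exact hn (Finsupp.ext fun i => by fin_cases i <;> assumption)
        exact pow_inr_hol 0 _ h0 hh
      · rw [pow_inr_hol 1 _ h1 hh, map_zero]
    · rw [pow_inr_hol 2 _ h2 hh]; simp only [map_zero]
  · rw [pow_inr_hol 3 _ h3 hh]; simp only [map_zero]

lemma dW_single_eq (j : Fin 4) : dW (Finsupp.single j 1) = DOp (Sum.inr j) := by
  fin_cases j <;>
    simp [dW, Finsupp.single_apply]

lemma dZ_single_eq (j : Fin 4) : dZ (Finsupp.single j 1) = DOp (Sum.inl j) := by
  fin_cases j <;>
    simp [dZ, Finsupp.single_apply]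

lemma moyalCoeff_zero_zero (c : ℂ) : moyalCoeff c 0 0 = 1 := by
  simp [moyalCoeff]

lemma moyalCoeff_zero_single (c : ℂ) (j : Fin 4) :
    moyalCoeff c 0 (Finsupp.single j 1) = -c := by
  fin_cases j <;>
    simp [moyalCoeff, Fin.sum_univ_four, Fin.prod_univ_four, Finsupp.single_apply,
      Nat.factorial]

/-- For `g` holomorphic and `f = b + Σ_α a_α W_α` affine-linear in the `W`-variables with
holomorphic coefficients, `f ⋆ g = f·g − c·Σ_α a_α ∂g/∂Z_α`; in particular `f ⋆ g` is again
affine-linear in the `W`-variables with holomorphic coefficients. -/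
theorem stmt1 (c : ℂ) (g : TwistorPoly) (hg : g ∈ holSub)
    (b : TwistorPoly) (hb : b ∈ holSub) (a : Fin 4 → TwistorPoly) (ha : ∀ i, a i ∈ holSub) :
    moyal c (b + ∑ i : Fin 4, a i * X (Sum.inr i)) g
      = (b + ∑ i : Fin 4, a i * X (Sum.inr i)) * g
        - c • ∑ i : Fin 4, a i * (MvPolynomial.pderiv (Sum.inl i) g) ∧
    ∃ (b' : TwistorPoly) (a' : Fin 4 → TwistorPoly), b' ∈ holSub ∧ (∀ i, a' i ∈ holSub) ∧
      moyal c (b + ∑ i : Fin 4, a i * X (Sum.inr i)) g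
        = b' + ∑ i : Fin 4, a' i * X (Sum.inr i) := by
  classical
  set f : TwistorPoly := b + ∑ i : Fin 4, a i * X (Sum.inr i) with hfdef
  -- the W-derivatives of f
  have hfd : ∀ j : Fin 4, pderiv (Sum.inr j) f = a j := by
    intro j
    rw [hfdef, map_add, pderiv_inr_hol j hb, map_sum, zero_add]
    have : ∀ i : Fin 4, pderiv (Sum.inr j) (a i * X (Sum.inr i))
        = if i = j then a i else 0 := by
      intro i
      rw [pderiv_mul, pderiv_inr_hol j (ha i), zero_mul, zero_add]
      by_cases hij : i = j
      · subst hij; rw [pderiv_X_self, mul_one, if_pos rfl]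
      · rw [pderiv_X_of_ne (by simpa using hij), mul_zero, if_neg hij]
    rw [Finset.sum_congr rfl fun i _ => this i, Finset.sum_ite_eq' Finset.univ j a,
      if_pos (Finset.mem_univ j)]
  have hpowf : ∀ (j : Fin 4) (k : ℕ), (DOp (Sum.inr j) ^ k) f
      = if k = 0 then f else if k = 1 then a j else 0 := by
    intro j k
    match k with
    | 0 => simp
    | 1 => simp [pow_one, DOp_apply, hfd]
    | (k + 2) =>
      rw [pow_succ, Module.End.mul_apply, DOp_apply, hfd,
        pow_inr_hol j _ (by omega) (ha j)]
      simp
  -- dW n f vanishes unless n = 0 or n is a single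
  have hdWf : ∀ n : Fin 4 →₀ ℕ, n ≠ 0 → (∀ j, n ≠ Finsupp.single j 1) → dW n f = 0 := by
    intro n hn0 hns
    have hext : ∀ j : Fin 4, (n 0 = Finsupp.single j 1 0) → (n 1 = Finsupp.single j 1 1) →
        (n 2 = Finsupp.single j 1 2) → (n 3 = Finsupp.single j 1 3) → False := by
      intro j e0 e1 e2 e3
      exact hns j (Finsupp.ext fun i => by fin_cases i <;> assumption)
    simp only [dW, Module.End.mul_apply]
    rw [hpowf 3 (n 3)]
    split_ifs with h3 h3'
    · rw [hpowf 2 (n 2)]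
      split_ifs with h2 h2'
      · rw [hpowf 1 (n 1)]
        split_ifs with h1 h1'
        · rw [hpowf 0 (n 0)]
          split_ifs with h0 h0'
          · exact absurd (Finsupp.ext fun i => by fin_cases i <;> assumption) hn0
          · exact (hext 0 (by simp [h0', Finsupp.single_apply]) (by simp [h1, Finsupp.single_apply]) (by simp [h2, Finsupp.single_apply]) (by simp [h3, Finsupp.single_apply])).elim
          · rfl
        · by_cases h0 : n 0 = 0
          · rw [h0, pow_zero, Module.End.one_apply]
            exact (hext 1 (by simp [h0, Finsupp.single_apply]) (by simp [h1', Finsupp.single_apply]) (by simp [h2, Finsupp.single_apply]) (by simp [h3, Finsupp.single_apply])).elim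
          · exact pow_inr_hol 0 _ h0 (ha 1)
        · simp only [map_zero]
      · by_cases h1 : n 1 = 0
        · rw [h1, pow_zero, Module.End.one_apply]
          by_cases h0 : n 0 = 0
          · rw [h0, pow_zero, Module.End.one_apply]
            exact (hext 2 (by simp [h0, Finsupp.single_apply]) (by simp [h1, Finsupp.single_apply]) (by simp [h2', Finsupp.single_apply]) (by simp [h3, Finsupp.single_apply])).elim
          · exact pow_inr_hol 0 _ h0 (ha 2)
        · rw [pow_inr_hol 1 _ h1 (ha 2), map_zero]
      · simp only [map_zero]
    · by_cases h2 : n 2 = 0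
      · rw [h2, pow_zero, Module.End.one_apply]
        by_cases h1 : n 1 = 0
        · rw [h1, pow_zero, Module.End.one_apply]
          by_cases h0 : n 0 = 0
          · rw [h0, pow_zero, Module.End.one_apply]
            exact (hext 3 (by simp [h0, Finsupp.single_apply]) (by simp [h1, Finsupp.single_apply]) (by simp [h2, Finsupp.single_apply]) (by simp [h3', Finsupp.single_apply])).elim
          · exact pow_inr_hol 0 _ h0 (ha 3)
        · rw [pow_inr_hol 1 _ h1 (ha 3), map_zero]
      · rw [pow_inr_hol 2 _ h2 (ha 3)]; simp only [map_zero]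
    · simp only [map_zero]
  -- support of the Moyal sum
  set F : (Fin 4 →₀ ℕ) × (Fin 4 →₀ ℕ) → TwistorPoly :=
    fun p => moyalCoeff c p.1 p.2 • (dZ p.1 (dW p.2 f) * dW p.1 (dZ p.2 g)) with hF
  set T : Finset ((Fin 4 →₀ ℕ) × (Fin 4 →₀ ℕ)) :=
    Finset.image (fun j : Fin 4 => ((0 : Fin 4 →₀ ℕ), Finsupp.single j 1)) Finset.univ with hT
  set S : Finset ((Fin 4 →₀ ℕ) × (Fin 4 →₀ ℕ)) :=
    insert ((0 : Fin 4 →₀ ℕ), (0 : Fin 4 →₀ ℕ)) T with hS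
  have hsub : Function.support F ⊆ ↑S := by
    intro p hp
    by_contra hpS
    apply hp
    have hp00 : p ≠ ((0 : Fin 4 →₀ ℕ), (0 : Fin 4 →₀ ℕ)) := by
      intro h
      apply hpS
      rw [h, hS]
      exact Finset.mem_coe.mpr (Finset.mem_insert_self _ _)
    have hpsing : ∀ j : Fin 4, p ≠ ((0 : Fin 4 →₀ ℕ), Finsupp.single j 1) := by
      intro j h
      apply hpS
      rw [h, hS]
      exact Finset.mem_coe.mpr (Finset.mem_insert_of_mem
        (Finset.mem_image_of_mem _ (Finset.mem_univ j)))
    by_cases hm : p.1 = 0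
    · have hn0 : p.2 ≠ 0 := by
        intro h; exact hp00 (Prod.ext hm h)
      have hns : ∀ j, p.2 ≠ Finsupp.single j 1 := by
        intro j h; exact hpsing j (Prod.ext hm h)
      show moyalCoeff c p.1 p.2 • (dZ p.1 (dW p.2 f) * dW p.1 (dZ p.2 g)) = 0
      rw [hdWf p.2 hn0 hns, map_zero, zero_mul, smul_zero]
    · show moyalCoeff c p.1 p.2 • (dZ p.1 (dW p.2 f) * dW p.1 (dZ p.2 g)) = 0
      rw [dW_hol_ne hm (dZ_hol p.2 hg), mul_zero, smul_zero]
  have h00T : ((0 : Fin 4 →₀ ℕ), (0 : Fin 4 →₀ ℕ)) ∉ T := by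
    rw [hT]
    simp [Prod.ext_iff, Finsupp.single_eq_zero]
  have hmain : moyal c f g = f * g - c • ∑ i : Fin 4, a i * (pderiv (Sum.inl i) g) := by
    have : moyal c f g = ∑ p ∈ S, F p := by
      rw [moyal]
      exact finsum_eq_sum_of_support_subset F hsub
    rw [this, hS, Finset.sum_insert h00T, hT, Finset.sum_image
      (fun j _ j' _ h => Finsupp.single_left_injective one_ne_zero (Prod.ext_iff.mp h).2)]
    have hF00 : F ((0 : Fin 4 →₀ ℕ), (0 : Fin 4 →₀ ℕ)) = f * g := by
      show moyalCoeff c 0 0 • (dZ 0 (dW 0 f) * dW 0 (dZ 0 g)) = f * g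
      rw [moyalCoeff_zero_zero, dW_zero_apply, dZ_zero_apply, dZ_zero_apply, dW_zero_apply,
        one_smul]
    have hFj : ∀ j : Fin 4, F ((0 : Fin 4 →₀ ℕ), Finsupp.single j 1)
        = (-c) • (a j * pderiv (Sum.inl j) g) := by
      intro j
      show moyalCoeff c 0 (Finsupp.single j 1)
          • (dZ 0 (dW (Finsupp.single j 1) f) * dW 0 (dZ (Finsupp.single j 1) g))
        = (-c) • (a j * pderiv (Sum.inl j) g)
      rw [moyalCoeff_zero_single, dW_single_eq, dZ_single_eq, DOp_apply, hfd, dZ_zero_apply,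
        DOp_apply, dW_zero_apply]
    rw [hF00, Finset.sum_congr rfl fun j _ => hFj j]
    rw [← Finset.smul_sum, neg_smul, ← sub_eq_add_neg]
  refine ⟨hmain, b * g - c • ∑ i : Fin 4, a i * (pderiv (Sum.inl i) g), fun i => a i * g,
    ?_, fun i => mul_mem (ha i) hg, ?_⟩
  · refine sub_mem (mul_mem hb hg) (Subalgebra.smul_mem _ (Subalgebra.sum_mem _ fun i _ =>
      mul_mem (ha i) (pderiv_inl_hol i hg)) c)
  · rw [hmain, hfdef, add_mul, Finset.sum_mul]
    have : ∀ i : Fin 4, a i * X (Sum.inr i) * g = a i * g * X (Sum.inr i) := fun i => by ring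
    rw [Finset.sum_congr rfl fun i _ => this i]
    abel

end
end

section
/- Let A be a unital ℂ-algebra with a conjugate-linear star operation, q ∈ ℂ with q·conj(q) = 1, and α, β ∈ A satisfying the defining relations of S³_θ: α·β = q·β·α, α*·β = conj(q)·β·α*, α·α* = α*·α, β·β* = β*·β, and α·α* + β·β* = 1. Set X := β·α and Y := α·α* − (1/2)·1. Then: Y* = Y, X·Y = Y·X, X*·Y = Y·X*, X·X* = X*·X, and Y² + X·X* = (1/4)·1. (Hence the U(1)-invariant elements X, X*, Y of S³_θ satisfy the relations of the algebra of functions on a commutative 2-sphere, so the base of the Hopf fibration of S³_θ remains a classical S².) -/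
/-- Given `α`, `β` satisfying the defining relations of the θ-deformed 3-sphere `S³_θ`
(with `q` of modulus one), the invariant elements `X = βα` and `Y = αα* − ½` satisfy the
relations of the algebra of functions on a commutative 2-sphere:
`Y* = Y`, `XY = YX`, `X*Y = YX*`, `XX* = X*X`, and `Y² + XX* = ¼`. -/
theorem stmt3 {A : Type*} [Ring A] [Algebra ℂ A] [StarRing A] [StarModule ℂ A]
    (q : ℂ) (hq : q * (starRingEnd ℂ) q = 1) (α β : A)
    (h1 : α * β = q • (β * α))
    (h2 : star α * β = ((starRingEnd ℂ) q) • (β * star α))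
    (h3 : α * star α = star α * α)
    (h4 : β * star β = star β * β)
    (h5 : α * star α + β * star β = 1) :
    star (α * star α - ((1 : ℂ)/2) • (1 : A)) = α * star α - ((1 : ℂ)/2) • (1 : A) ∧
    (β * α) * (α * star α - ((1 : ℂ)/2) • (1 : A))
        = (α * star α - ((1 : ℂ)/2) • (1 : A)) * (β * α) ∧
    star (β * α) * (α * star α - ((1 : ℂ)/2) • (1 : A))
        = (α * star α - ((1 : ℂ)/2) • (1 : A)) * star (β * α) ∧
    (β * α) * star (β * α) = star (β * α) * (β * α) ∧
    (α * star α - ((1 : ℂ)/2) • (1 : A)) ^ 2 + (β * α) * star (β * α)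
        = ((1 : ℂ)/4) • (1 : A) := by
  have hN : star (α * star α) = α * star α := by rw [star_mul, star_star]
  have kβ : (α * star α) * β = β * (α * star α) := by
    calc (α * star α) * β = α * (star α * β) := mul_assoc _ _ _
      _ = α * ((starRingEnd ℂ q) • (β * star α)) := by rw [h2]
      _ = (starRingEnd ℂ q) • (α * (β * star α)) := mul_smul_comm _ _ _
      _ = (starRingEnd ℂ q) • ((α * β) * star α) := by rw [mul_assoc]
      _ = (starRingEnd ℂ q) • ((q • (β * α)) * star α) := by rw [h1]
      _ = (starRingEnd ℂ q * q) • ((β * α) * star α) := by rw [smul_mul_assoc, smul_smul]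
      _ = β * (α * star α) := by
            rw [mul_comm ((starRingEnd ℂ) q) q, hq, one_smul, mul_assoc]
  have kα : (α * star α) * α = α * (α * star α) := by rw [mul_assoc, ← h3]
  have kα' : (α * star α) * star α = star α * (α * star α) := by
    calc (α * star α) * star α = (star α * α) * star α := by rw [h3]
      _ = star α * (α * star α) := mul_assoc _ _ _
  have kβ' : (α * star α) * star β = star β * (α * star α) := by
    have h := congrArg star kβ
    simp only [star_mul, star_star] at h
    exact h.symm
  have hM : β * star β = 1 - α * star α := eq_sub_of_add_eq' h5
  have hcX : (β * α) * (α * star α) = (α * star α) * (β * α) := by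
    calc (β * α) * (α * star α) = β * (α * (α * star α)) := mul_assoc _ _ _
      _ = β * ((α * star α) * α) := by rw [← kα]
      _ = (β * (α * star α)) * α := (mul_assoc _ _ _).symm
      _ = ((α * star α) * β) * α := by rw [kβ]
      _ = (α * star α) * (β * α) := mul_assoc _ _ _
  have hcX' : star (β * α) * (α * star α) = (α * star α) * star (β * α) := by
    rw [star_mul]
    calc (star α * star β) * (α * star α) = star α * (star β * (α * star α)) := mul_assoc _ _ _
      _ = star α * ((α * star α) * star β) := by rw [← kβ']
      _ = (star α * (α * star α)) * star β := (mul_assoc _ _ _).symm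
      _ = ((α * star α) * star α) * star β := by rw [kα']
      _ = (α * star α) * (star α * star β) := mul_assoc _ _ _
  have hXX : (β * α) * star (β * α) = α * star α - (α * star α) * (α * star α) := by
    calc (β * α) * star (β * α) = β * (α * (star α * star β)) := by rw [star_mul, mul_assoc]
      _ = β * ((α * star α) * star β) := by rw [← mul_assoc α]
      _ = β * (star β * (α * star α)) := by rw [kβ']
      _ = (β * star β) * (α * star α) := (mul_assoc _ _ _).symm
      _ = (1 - α * star α) * (α * star α) := by rw [hM]
      _ = α * star α - (α * star α) * (α * star α) := by rw [sub_mul, one_mul]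
  have hX'X : star (β * α) * (β * α) = α * star α - (α * star α) * (α * star α) := by
    calc star (β * α) * (β * α) = star α * (star β * (β * α)) := by rw [star_mul, mul_assoc]
      _ = star α * ((star β * β) * α) := by rw [← mul_assoc (star β)]
      _ = star α * ((β * star β) * α) := by rw [← h4]
      _ = star α * ((1 - α * star α) * α) := by rw [hM]
      _ = star α * (α - (α * star α) * α) := by rw [sub_mul, one_mul]
      _ = star α * α - star α * ((α * star α) * α) := by rw [mul_sub]
      _ = star α * α - star α * (α * (α * star α)) := by rw [kα]
      _ = star α * α - (star α * α) * (α * star α) := by rw [mul_assoc]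
      _ = α * star α - (α * star α) * (α * star α) := by rw [← h3]
  refine ⟨?_, ?_, ?_, hXX.trans hX'X.symm, ?_⟩
  · rw [star_sub, hN, star_smul, star_one]
    norm_num
  · simp only [mul_sub, sub_mul, hcX, mul_smul_comm, smul_mul_assoc, mul_one, one_mul]
  · simp only [mul_sub, sub_mul, hcX', mul_smul_comm, smul_mul_assoc, mul_one, one_mul]
  · rw [hXX]
    simp only [pow_two, mul_sub, sub_mul, smul_mul_assoc, mul_smul_comm, smul_smul,
      mul_one, one_mul]
    module
end

section
/- In the Wick algebra on two generators with R² := ζ₀†·ζ₀ + ζ₁·ζ₁†, suppose ζ₀ is invertible in A, and set Z := ζ₀⁻¹·ζ₁. Then Z commutes with R²: R²·Z = Z·R². Similarly, if ζ₁ is invertible and W := ζ₁⁻¹·ζ₀, then R²·W = W·R². (These are the local coordinates on the deformed ℂP¹, which commute with the deformation parameter μ = −2ħR⁻².) -/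
/-- In the Wick algebra on two generators with `R² = ζ₀†ζ₀ + ζ₁ζ₁†`: if `ζ₀` is invertible
(with two-sided inverse `u`) then `Z = ζ₀⁻¹ζ₁` commutes with `R²`, and if `ζ₁` is invertible
(with two-sided inverse `v`) then `W = ζ₁⁻¹ζ₀` commutes with `R²`. -/
theorem stmt5 {A : Type*} [Ring A] [Algebra ℂ A] (hbar : ℂ)
    (ζ ζd : Fin 2 → A)
    (h1 : ∀ i j, ζ i * ζ j = ζ j * ζ i)
    (h2 : ∀ i j, ζd i * ζd j = ζd j * ζd i)
    (h3 : ∀ i j, ζ i * ζd j - ζd j * ζ i = if i = j then hbar • (1 : A) else 0) :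
    (∀ u : A, u * ζ 0 = 1 → ζ 0 * u = 1 →
      (ζd 0 * ζ 0 + ζ 1 * ζd 1) * (u * ζ 1) = (u * ζ 1) * (ζd 0 * ζ 0 + ζ 1 * ζd 1)) ∧
    (∀ v : A, v * ζ 1 = 1 → ζ 1 * v = 1 →
      (ζd 0 * ζ 0 + ζ 1 * ζd 1) * (v * ζ 0) = (v * ζ 0) * (ζd 0 * ζ 0 + ζ 1 * ζd 1)) := by
  have c00 : ζ 0 * ζd 0 = ζd 0 * ζ 0 + hbar • (1 : A) := by
    have h := h3 0 0; rw [if_pos rfl] at h; exact sub_eq_iff_eq_add'.mp h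
  have c11 : ζ 1 * ζd 1 = ζd 1 * ζ 1 + hbar • (1 : A) := by
    have h := h3 1 1; rw [if_pos rfl] at h; exact sub_eq_iff_eq_add'.mp h
  have c01 : ζ 0 * ζd 1 = ζd 1 * ζ 0 := by
    have h := h3 0 1; rw [if_neg (by decide)] at h; exact sub_eq_zero.mp h
  have c10 : ζ 1 * ζd 0 = ζd 0 * ζ 1 := by
    have h := h3 1 0; rw [if_neg (by decide)] at h; exact sub_eq_zero.mp h
  have d00 : ζd 0 * ζ 0 = ζ 0 * ζd 0 - hbar • (1 : A) := by rw [c00]; abel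
  have d11 : ζd 1 * ζ 1 = ζ 1 * ζd 1 - hbar • (1 : A) := by rw [c11]; abel
  -- key commutation relations: R² shifts by -ħ past each ζᵢ
  have key0 : (ζd 0 * ζ 0 + ζ 1 * ζd 1) * ζ 0
      = ζ 0 * (ζd 0 * ζ 0 + ζ 1 * ζd 1) - hbar • ζ 0 := by
    calc (ζd 0 * ζ 0 + ζ 1 * ζd 1) * ζ 0
        = (ζd 0 * ζ 0) * ζ 0 + ζ 1 * (ζd 1 * ζ 0) := by noncomm_ring
      _ = (ζ 0 * ζd 0 - hbar • (1:A)) * ζ 0 + ζ 1 * (ζ 0 * ζd 1) := by rw [d00, c01]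
      _ = ζ 0 * (ζd 0 * ζ 0) + (ζ 1 * ζ 0) * ζd 1 - hbar • ζ 0 := by noncomm_ring
      _ = ζ 0 * (ζd 0 * ζ 0) + (ζ 0 * ζ 1) * ζd 1 - hbar • ζ 0 := by rw [h1 1 0]
      _ = ζ 0 * (ζd 0 * ζ 0 + ζ 1 * ζd 1) - hbar • ζ 0 := by noncomm_ring
  have key1 : (ζd 0 * ζ 0 + ζ 1 * ζd 1) * ζ 1
      = ζ 1 * (ζd 0 * ζ 0 + ζ 1 * ζd 1) - hbar • ζ 1 := by
    calc (ζd 0 * ζ 0 + ζ 1 * ζd 1) * ζ 1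
        = ζd 0 * (ζ 0 * ζ 1) + ζ 1 * (ζd 1 * ζ 1) := by noncomm_ring
      _ = ζd 0 * (ζ 1 * ζ 0) + ζ 1 * (ζ 1 * ζd 1 - hbar • (1:A)) := by rw [h1 0 1, d11]
      _ = (ζd 0 * ζ 1) * ζ 0 + ζ 1 * (ζ 1 * ζd 1) - hbar • ζ 1 := by noncomm_ring
      _ = (ζ 1 * ζd 0) * ζ 0 + ζ 1 * (ζ 1 * ζd 1) - hbar • ζ 1 := by rw [c10]
      _ = ζ 1 * (ζd 0 * ζ 0 + ζ 1 * ζd 1) - hbar • ζ 1 := by noncomm_ring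
  -- if w is a two-sided inverse of ζ i, then R² shifts by +ħ past w
  have inv_key : ∀ (i : Fin 2) (w : A), w * ζ i = 1 → ζ i * w = 1 →
      (ζd 0 * ζ 0 + ζ 1 * ζd 1) * ζ i
        = ζ i * (ζd 0 * ζ 0 + ζ 1 * ζd 1) - hbar • ζ i →
      (ζd 0 * ζ 0 + ζ 1 * ζd 1) * w
        = w * (ζd 0 * ζ 0 + ζ 1 * ζd 1) + hbar • w := by
    intro i w hw1 hw2 hkey
    have h := congrArg (fun x => w * x * w) hkey
    beta_reduce at h
    have lhs : w * ((ζd 0 * ζ 0 + ζ 1 * ζd 1) * ζ i) * w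
        = w * (ζd 0 * ζ 0 + ζ 1 * ζd 1) := by
      rw [mul_assoc, mul_assoc, hw2, mul_one]
    have rhs : w * (ζ i * (ζd 0 * ζ 0 + ζ 1 * ζd 1) - hbar • ζ i) * w
        = (ζd 0 * ζ 0 + ζ 1 * ζd 1) * w - hbar • w := by
      rw [mul_sub, sub_mul, ← mul_assoc, hw1, one_mul, mul_smul_comm, smul_mul_assoc, hw1, one_mul]
    rw [lhs, rhs] at h
    rw [eq_sub_iff_add_eq] at h
    linear_combination (norm := noncomm_ring) h.symm
  constructor
  · intro u hu1 hu2
    have hRu := inv_key 0 u hu1 hu2 key0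
    calc (ζd 0 * ζ 0 + ζ 1 * ζd 1) * (u * ζ 1)
        = ((ζd 0 * ζ 0 + ζ 1 * ζd 1) * u) * ζ 1 := by rw [mul_assoc]
      _ = (u * (ζd 0 * ζ 0 + ζ 1 * ζd 1) + hbar • u) * ζ 1 := by rw [hRu]
      _ = u * ((ζd 0 * ζ 0 + ζ 1 * ζd 1) * ζ 1) + hbar • (u * ζ 1) := by noncomm_ring
      _ = u * (ζ 1 * (ζd 0 * ζ 0 + ζ 1 * ζd 1) - hbar • ζ 1) + hbar • (u * ζ 1) := by rw [key1]
      _ = (u * ζ 1) * (ζd 0 * ζ 0 + ζ 1 * ζd 1) := by noncomm_ring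
  · intro v hv1 hv2
    have hRv := inv_key 1 v hv1 hv2 key1
    calc (ζd 0 * ζ 0 + ζ 1 * ζd 1) * (v * ζ 0)
        = ((ζd 0 * ζ 0 + ζ 1 * ζd 1) * v) * ζ 0 := by rw [mul_assoc]
      _ = (v * (ζd 0 * ζ 0 + ζ 1 * ζd 1) + hbar • v) * ζ 0 := by rw [hRv]
      _ = v * ((ζd 0 * ζ 0 + ζ 1 * ζd 1) * ζ 0) + hbar • (v * ζ 0) := by noncomm_ring
      _ = v * (ζ 0 * (ζd 0 * ζ 0 + ζ 1 * ζd 1) - hbar • ζ 0) + hbar • (v * ζ 0) := by rw [key0]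
      _ = (v * ζ 0) * (ζd 0 * ζ 0 + ζ 1 * ζd 1) := by noncomm_ring
end

section
/- In the Wick algebra on four generators, with α := 2·(ζ₀·ζ₂† + ζ₁·ζ₃†), α† := 2·(ζ₀†·ζ₂ + ζ₁†·ζ₃), x := ζ₀·ζ₀† + ζ₁·ζ₁† − ζ₂·ζ₂† − ζ₃·ζ₃†, R₀² := ζ₀†·ζ₀ + ζ₁·ζ₁†, and R₁² := ζ₂†·ζ₂ + ζ₃·ζ₃†, the following identities hold: x = R₀² − R₁², and [α, α†] = −4·ħ·x = 4·ħ·(R₁² − R₀²). In particular the commutator does not vanish, so the subalgebra generated by the images of the 4-sphere coordinates is noncommutative. -/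
private lemma wick_comm {A : Type*} [Ring A] (a z c x H : A)
    (hac : a * c = c * a + H) (hxz : x * z = z * x + H)
    (hax : a * x = x * a) (hcz : c * z = z * c)
    (hHc : (c * a) * H = H * (c * a)) :
    (a * z) * (c * x) - (c * x) * (a * z) = H * (z * x) - H * (c * a) := by
  have L1 : a * z * (c * x) = c * a * (z * x) + H * (z * x) := by
    calc a * z * (c * x) = a * (c * z) * x := by rw [hcz]; noncomm_ring
      _ = (a * c) * (z * x) := by noncomm_ring
      _ = (c * a + H) * (z * x) := by rw [hac]
      _ = c * a * (z * x) + H * (z * x) := by noncomm_ring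
  have L2 : (c * x) * (a * z) = c * a * (z * x) + H * (c * a) := by
    calc (c * x) * (a * z) = c * (a * x) * z := by rw [hax]; noncomm_ring
      _ = (c * a) * (x * z) := by noncomm_ring
      _ = (c * a) * (z * x + H) := by rw [hxz]
      _ = c * a * (z * x) + (c * a) * H := by noncomm_ring
      _ = c * a * (z * x) + H * (c * a) := by rw [hHc]
  rw [L1, L2]; noncomm_ring

private lemma wick_comm0 {A : Type*} [Ring A] (a z c x : A)
    (hac : a * c = c * a) (hxz : x * z = z * x)
    (hax : a * x = x * a) (hcz : c * z = z * c) :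
    (a * z) * (c * x) - (c * x) * (a * z) = 0 := by
  have : (a * z) * (c * x) = (c * x) * (a * z) := by
    calc (a * z) * (c * x) = a * (c * z) * x := by rw [hcz]; noncomm_ring
      _ = (a * c) * (z * x) := by noncomm_ring
      _ = (c * a) * (x * z) := by rw [hac, ← hxz]
      _ = c * (a * x) * z := by noncomm_ring
      _ = c * (x * a) * z := by rw [hax]
      _ = (c * x) * (a * z) := by noncomm_ring
  rw [this, sub_self]

/-- In the Wick algebra on four generators, with `α = 2(ζ₀ζ₂† + ζ₁ζ₃†)`,
`α† = 2(ζ₀†ζ₂ + ζ₁†ζ₃)`, `x = ζ₀ζ₀† + ζ₁ζ₁† − ζ₂ζ₂† − ζ₃ζ₃†`, `R₀² = ζ₀†ζ₀ + ζ₁ζ₁†`,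
`R₁² = ζ₂†ζ₂ + ζ₃ζ₃†`, one has `x = R₀² − R₁²` and
`[α, α†] = −4·hbar·x = 4·hbar·(R₁² − R₀²)`. -/
theorem stmt9 {A : Type*} [Ring A] [Algebra ℂ A] (hbar : ℂ)
    (ζ ζd : Fin 4 → A)
    (h1 : ∀ i j, ζ i * ζ j = ζ j * ζ i)
    (h2 : ∀ i j, ζd i * ζd j = ζd j * ζd i)
    (h3 : ∀ i j, ζ i * ζd j - ζd j * ζ i = if i = j then hbar • (1 : A) else 0) :
    let α : A := 2 * (ζ 0 * ζd 2 + ζ 1 * ζd 3)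
    let αd : A := 2 * (ζd 0 * ζ 2 + ζd 1 * ζ 3)
    let x : A := ζ 0 * ζd 0 + ζ 1 * ζd 1 - ζ 2 * ζd 2 - ζ 3 * ζd 3
    let R0sq : A := ζd 0 * ζ 0 + ζ 1 * ζd 1
    let R1sq : A := ζd 2 * ζ 2 + ζ 3 * ζd 3
    x = R0sq - R1sq ∧
    α * αd - αd * α = (-(4 * hbar)) • x ∧
    α * αd - αd * α = (4 * hbar) • (R1sq - R0sq) := by
  intro α αd x R0sq R1sq
  set H : A := hbar • (1 : A) with hHdef
  have key : ∀ i j, ζ i * ζd j = ζd j * ζ i + if i = j then H else 0 := by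
    intro i j
    rw [← h3 i j, add_sub_cancel]
  have keyE : ∀ i, ζ i * ζd i = ζd i * ζ i + H := by
    intro i; simpa using key i i
  have keyN : ∀ i j, i ≠ j → ζ i * ζd j = ζd j * ζ i := by
    intro i j h; simpa [h] using key i j
  have hH : ∀ y : A, H * y = hbar • y := by
    intro y; rw [hHdef, smul_mul_assoc, one_mul]
  have hHc : ∀ y : A, y * H = H * y := by
    intro y; rw [hHdef, smul_mul_assoc, one_mul, mul_smul_comm, mul_one]
  have T1 : (ζ 0 * ζd 2) * (ζd 0 * ζ 2) - (ζd 0 * ζ 2) * (ζ 0 * ζd 2)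
      = H * (ζd 2 * ζ 2) - H * (ζd 0 * ζ 0) :=
    wick_comm _ _ _ _ _ (keyE 0) (keyE 2) (h1 0 2) (h2 0 2) (hHc _)
  have T4 : (ζ 1 * ζd 3) * (ζd 1 * ζ 3) - (ζd 1 * ζ 3) * (ζ 1 * ζd 3)
      = H * (ζd 3 * ζ 3) - H * (ζd 1 * ζ 1) :=
    wick_comm _ _ _ _ _ (keyE 1) (keyE 3) (h1 1 3) (h2 1 3) (hHc _)
  have T2 : (ζ 0 * ζd 2) * (ζd 1 * ζ 3) - (ζd 1 * ζ 3) * (ζ 0 * ζd 2) = 0 :=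
    wick_comm0 _ _ _ _ (keyN 0 1 (by decide)) (keyN 3 2 (by decide)) (h1 0 3) (h2 1 2)
  have T3 : (ζ 1 * ζd 3) * (ζd 0 * ζ 2) - (ζd 0 * ζ 2) * (ζ 1 * ζd 3) = 0 :=
    wick_comm0 _ _ _ _ (keyN 1 0 (by decide)) (keyN 2 3 (by decide)) (h1 1 2) (h2 0 3)
  have E : α * αd - αd * α =
      4 * (((ζ 0 * ζd 2) * (ζd 0 * ζ 2) - (ζd 0 * ζ 2) * (ζ 0 * ζd 2))
        + ((ζ 0 * ζd 2) * (ζd 1 * ζ 3) - (ζd 1 * ζ 3) * (ζ 0 * ζd 2))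
        + ((ζ 1 * ζd 3) * (ζd 0 * ζ 2) - (ζd 0 * ζ 2) * (ζ 1 * ζd 3))
        + ((ζ 1 * ζd 3) * (ζd 1 * ζ 3) - (ζd 1 * ζ 3) * (ζ 1 * ζd 3))) := by
    show (2 * (ζ 0 * ζd 2 + ζ 1 * ζd 3)) * (2 * (ζd 0 * ζ 2 + ζd 1 * ζ 3))
      - (2 * (ζd 0 * ζ 2 + ζd 1 * ζ 3)) * (2 * (ζ 0 * ζd 2 + ζ 1 * ζd 3)) = _
    noncomm_ring
  have C : α * αd - αd * α =
      4 * (H * (ζd 2 * ζ 2) + H * (ζd 3 * ζ 3) - H * (ζd 0 * ζ 0) - H * (ζd 1 * ζ 1)) := by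
    rw [E, T1, T2, T3, T4]; noncomm_ring
  have hx : x = R0sq - R1sq := by
    show ζ 0 * ζd 0 + ζ 1 * ζd 1 - ζ 2 * ζd 2 - ζ 3 * ζd 3
      = (ζd 0 * ζ 0 + ζ 1 * ζd 1) - (ζd 2 * ζ 2 + ζ 3 * ζd 3)
    rw [keyE 0, keyE 2]; noncomm_ring
  have h4h : ∀ y : A, (4 * hbar) • y = 4 * (H * y) := by
    intro y
    rw [mul_smul, ← hH, show (4 : ℂ) = ((4 : ℕ) : ℂ) by norm_num,
      Nat.cast_smul_eq_nsmul, nsmul_eq_mul]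
    norm_num
  refine ⟨hx, ?_, ?_⟩
  · rw [C, neg_smul, h4h]
    show _ = -(4 * (H * (ζ 0 * ζd 0 + ζ 1 * ζd 1 - ζ 2 * ζd 2 - ζ 3 * ζd 3)))
    rw [keyE 0, keyE 1, keyE 2, keyE 3]
    noncomm_ring
  · rw [C, h4h]
    show _ = 4 * (H * ((ζd 2 * ζ 2 + ζ 3 * ζd 3) - (ζd 0 * ζ 0 + ζ 1 * ζd 1)))
    rw [keyE 1, keyE 3]
    noncomm_ring
end

section
/- In the Wick algebra on four generators, with β := 2·(ζ₁·ζ₂ − ζ₀·ζ₃), β† := 2·(ζ₁†·ζ₂† − ζ₀†·ζ₃†), R₀² := ζ₀†·ζ₀ + ζ₁·ζ₁†, and R₁² := ζ₂†·ζ₂ + ζ₃·ζ₃†, one has [β, β†] = 4·ħ·(R₀² + R₁²). -/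
/-- In the Wick algebra on four generators, with `β = 2(ζ₁ζ₂ − ζ₀ζ₃)`,
`β† = 2(ζ₁†ζ₂† − ζ₀†ζ₃†)`, `R₀² = ζ₀†ζ₀ + ζ₁ζ₁†`, `R₁² = ζ₂†ζ₂ + ζ₃ζ₃†`,
one has `[β, β†] = 4·hbar·(R₀² + R₁²)`. -/
theorem stmt10 {A : Type*} [Ring A] [Algebra ℂ A] (hbar : ℂ)
    (ζ ζd : Fin 4 → A)
    (h1 : ∀ i j, ζ i * ζ j = ζ j * ζ i)
    (h2 : ∀ i j, ζd i * ζd j = ζd j * ζd i)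
    (h3 : ∀ i j, ζ i * ζd j - ζd j * ζ i = if i = j then hbar • (1 : A) else 0) :
    let β : A := 2 * (ζ 1 * ζ 2 - ζ 0 * ζ 3)
    let βd : A := 2 * (ζd 1 * ζd 2 - ζd 0 * ζd 3)
    let R0sq : A := ζd 0 * ζ 0 + ζ 1 * ζd 1
    let R1sq : A := ζd 2 * ζ 2 + ζ 3 * ζd 3
    β * βd - βd * β = (4 * hbar) • (R0sq + R1sq) := by
  intro β βd R0sq R1sq
  have sD : ∀ i, ζ i * ζd i = ζd i * ζ i + hbar • 1 := fun i => by
    have := h3 i i; simp at this; linear_combination (norm := noncomm_ring) this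
  have sO : ∀ i j, i ≠ j → ζ i * ζd j = ζd j * ζ i := fun i j hij => by
    have := h3 i j; rw [if_neg hij, sub_eq_zero] at this; exact this
  have Ediag : ∀ i j : Fin 4, j ≠ i →
      ζ i * ζ j * (ζd i * ζd j)
        = ζd i * ζ i * (ζd j * ζ j) + hbar • (ζd i * ζ i) + hbar • (ζd j * ζ j)
          + (hbar * hbar) • 1 := by
    intro i j hij
    calc ζ i * ζ j * (ζd i * ζd j) = ζ i * (ζ j * ζd i) * ζd j := by noncomm_ring
    _ = ζ i * (ζd i * ζ j) * ζd j := by rw [sO j i hij]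
    _ = (ζ i * ζd i) * (ζ j * ζd j) := by noncomm_ring
    _ = (ζd i * ζ i + hbar • 1) * (ζd j * ζ j + hbar • 1) := by rw [sD i, sD j]
    _ = _ := by
      simp only [add_mul, mul_add, smul_mul_assoc, mul_smul_comm, smul_smul, smul_add, one_mul, mul_one]
      noncomm_ring
  have Ediag' : ∀ i j : Fin 4, i ≠ j →
      ζd i * ζd j * (ζ i * ζ j) = ζd i * ζ i * (ζd j * ζ j) := by
    intro i j hij
    calc ζd i * ζd j * (ζ i * ζ j) = ζd i * (ζd j * ζ i) * ζ j := by noncomm_ring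
    _ = ζd i * (ζ i * ζd j) * ζ j := by rw [sO i j hij]
    _ = _ := by noncomm_ring
  have Ecross : ∀ i j k l : Fin 4, i ≠ k → i ≠ l → j ≠ k → j ≠ l →
      ζ i * ζ j * (ζd k * ζd l) = ζd k * ζd l * (ζ i * ζ j) := by
    intro i j k l hik hil hjk hjl
    calc ζ i * ζ j * (ζd k * ζd l) = ζ i * (ζ j * ζd k) * ζd l := by noncomm_ring
    _ = ζ i * (ζd k * ζ j) * ζd l := by rw [sO j k hjk]
    _ = (ζ i * ζd k) * (ζ j * ζd l) := by noncomm_ring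
    _ = (ζd k * ζ i) * (ζd l * ζ j) := by rw [sO i k hik, sO j l hjl]
    _ = ζd k * (ζ i * ζd l) * ζ j := by noncomm_ring
    _ = ζd k * (ζd l * ζ i) * ζ j := by rw [sO i l hil]
    _ = _ := by noncomm_ring
  have expand : β * βd - βd * β
      = 4 * ( ζ 1 * ζ 2 * (ζd 1 * ζd 2) - ζ 1 * ζ 2 * (ζd 0 * ζd 3)
            - ζ 0 * ζ 3 * (ζd 1 * ζd 2) + ζ 0 * ζ 3 * (ζd 0 * ζd 3)
            - ζd 1 * ζd 2 * (ζ 1 * ζ 2) + ζd 1 * ζd 2 * (ζ 0 * ζ 3)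
            + ζd 0 * ζd 3 * (ζ 1 * ζ 2) - ζd 0 * ζd 3 * (ζ 0 * ζ 3) ) := by
    show 2 * (ζ 1 * ζ 2 - ζ 0 * ζ 3) * (2 * (ζd 1 * ζd 2 - ζd 0 * ζd 3))
        - 2 * (ζd 1 * ζd 2 - ζd 0 * ζd 3) * (2 * (ζ 1 * ζ 2 - ζ 0 * ζ 3)) = _
    noncomm_ring
  rw [expand, Ediag 1 2 (by decide), Ediag 0 3 (by decide),
      Ediag' 1 2 (by decide), Ediag' 0 3 (by decide),
      Ecross 1 2 0 3 (by decide) (by decide) (by decide) (by decide),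
      show ζd 1 * ζd 2 * (ζ 0 * ζ 3) = ζ 0 * ζ 3 * (ζd 1 * ζd 2) from
        (Ecross 0 3 1 2 (by decide) (by decide) (by decide) (by decide)).symm]
  show _ = (4 * hbar) • (ζd 0 * ζ 0 + ζ 1 * ζd 1 + (ζd 2 * ζ 2 + ζ 3 * ζd 3))
  have h4 : ∀ x : A, (4:A) * x = (4:ℂ) • x := fun x => by
    rw [Algebra.smul_def, map_ofNat]
  rw [sD 1, sD 3, h4]
  module
end

section
/- In the Wick algebra on four generators, with α := 2·(ζ₀·ζ₂† + ζ₁·ζ₃†), α† := 2·(ζ₀†·ζ₂ + ζ₁†·ζ₃), β := 2·(ζ₁·ζ₂ − ζ₀·ζ₃), and β† := 2·(ζ₁†·ζ₂† − ζ₀†·ζ₃†), one has [α, β†] = 0 and [β, α†] = 0. -/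
private lemma swap3 {A : Type*} [Ring A] {a b : A} (h : a * b = b * a) (x : A) :
    a * (b * x) = b * (a * x) := by rw [← mul_assoc, h, mul_assoc]

private lemma two_pull {A : Type*} [Ring A] (x y : A) :
    x * (2 * y) = 2 * (x * y) := by rw [two_mul, mul_add, two_mul]

private lemma swap3' {A : Type*} [Ring A] {a b c : A} (h : a * b = b * a + c) (x : A) :
    a * (b * x) = b * (a * x) + c * x := by
  rw [← mul_assoc, h, add_mul, mul_assoc]

/-- In the Wick algebra on four generators, with `α = 2(ζ₀ζ₂† + ζ₁ζ₃†)`,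
`α† = 2(ζ₀†ζ₂ + ζ₁†ζ₃)`, `β = 2(ζ₁ζ₂ − ζ₀ζ₃)`, `β† = 2(ζ₁†ζ₂† − ζ₀†ζ₃†)`,
one has `[α, β†] = 0` and `[β, α†] = 0`. -/
theorem stmt11 {A : Type*} [Ring A] [Algebra ℂ A] (hbar : ℂ)
    (ζ ζd : Fin 4 → A)
    (h1 : ∀ i j, ζ i * ζ j = ζ j * ζ i)
    (h2 : ∀ i j, ζd i * ζd j = ζd j * ζd i)
    (h3 : ∀ i j, ζ i * ζd j - ζd j * ζ i = if i = j then hbar • (1 : A) else 0) :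
    let α : A := 2 * (ζ 0 * ζd 2 + ζ 1 * ζd 3)
    let αd : A := 2 * (ζd 0 * ζ 2 + ζd 1 * ζ 3)
    let β : A := 2 * (ζ 1 * ζ 2 - ζ 0 * ζ 3)
    let βd : A := 2 * (ζd 1 * ζd 2 - ζd 0 * ζd 3)
    α * βd - βd * α = 0 ∧ β * αd - αd * β = 0 := by
  intro α αd β βd
  have hne : ∀ i j : Fin 4, i ≠ j → ζ i * ζd j = ζd j * ζ i := by
    intro i j h
    exact sub_eq_zero.mp (by rw [h3 i j, if_neg h])
  have heq : ∀ i : Fin 4, ζ i * ζd i = ζd i * ζ i + hbar • (1 : A) := by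
    intro i
    have := h3 i i
    rw [if_pos rfl, sub_eq_iff_eq_add] at this
    rw [this, add_comm]
  have hne3 : ∀ i j : Fin 4, i ≠ j → ∀ x : A, ζ i * (ζd j * x) = ζd j * (ζ i * x) :=
    fun i j h x => swap3 (hne i j h) x
  have heq3 : ∀ i : Fin 4, ∀ x : A, ζ i * (ζd i * x) = ζd i * (ζ i * x) + hbar • x :=
    fun i x => by rw [swap3' (heq i) x, smul_mul_assoc, one_mul]
  constructor
  · show 2 * (ζ 0 * ζd 2 + ζ 1 * ζd 3) * (2 * (ζd 1 * ζd 2 - ζd 0 * ζd 3))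
      - 2 * (ζd 1 * ζd 2 - ζd 0 * ζd 3) * (2 * (ζ 0 * ζd 2 + ζ 1 * ζd 3)) = 0
    simp only [two_pull, mul_add, add_mul, mul_sub, sub_mul, mul_assoc,
      hne 0 1 (by decide), hne 0 2 (by decide), hne 0 3 (by decide),
      hne 1 0 (by decide), hne 1 2 (by decide), hne 1 3 (by decide),
      hne 2 0 (by decide), hne 2 1 (by decide), hne 2 3 (by decide),
      hne 3 0 (by decide), hne 3 1 (by decide), hne 3 2 (by decide),
      hne3 0 1 (by decide), hne3 0 2 (by decide), hne3 0 3 (by decide),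
      hne3 1 0 (by decide), hne3 1 2 (by decide), hne3 1 3 (by decide),
      hne3 2 0 (by decide), hne3 2 1 (by decide), hne3 2 3 (by decide),
      hne3 3 0 (by decide), hne3 3 1 (by decide), hne3 3 2 (by decide),
      heq 0, heq 1, heq 2, heq 3, heq3 0, heq3 1, heq3 2, heq3 3,
      h2 2 1, h2 3 1, h2 3 2, h2 2 0, h2 3 0, h2 1 0,
      swap3 (h2 2 1), swap3 (h2 3 1), swap3 (h2 3 2),
      swap3 (h2 2 0), swap3 (h2 3 0), swap3 (h2 1 0),
      h1 2 1, h1 3 1, h1 3 2, h1 2 0, h1 3 0, h1 1 0,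
      swap3 (h1 2 1), swap3 (h1 3 1), swap3 (h1 3 2),
      swap3 (h1 2 0), swap3 (h1 3 0), swap3 (h1 1 0),
      mul_add, add_mul, mul_sub, sub_mul, smul_add, smul_sub, mul_smul_comm]
    noncomm_ring
  · show 2 * (ζ 1 * ζ 2 - ζ 0 * ζ 3) * (2 * (ζd 0 * ζ 2 + ζd 1 * ζ 3))
      - 2 * (ζd 0 * ζ 2 + ζd 1 * ζ 3) * (2 * (ζ 1 * ζ 2 - ζ 0 * ζ 3)) = 0
    simp only [two_pull, mul_add, add_mul, mul_sub, sub_mul, mul_assoc,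
      hne 0 1 (by decide), hne 0 2 (by decide), hne 0 3 (by decide),
      hne 1 0 (by decide), hne 1 2 (by decide), hne 1 3 (by decide),
      hne 2 0 (by decide), hne 2 1 (by decide), hne 2 3 (by decide),
      hne 3 0 (by decide), hne 3 1 (by decide), hne 3 2 (by decide),
      hne3 0 1 (by decide), hne3 0 2 (by decide), hne3 0 3 (by decide),
      hne3 1 0 (by decide), hne3 1 2 (by decide), hne3 1 3 (by decide),
      hne3 2 0 (by decide), hne3 2 1 (by decide), hne3 2 3 (by decide),
      hne3 3 0 (by decide), hne3 3 1 (by decide), hne3 3 2 (by decide),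
      heq 0, heq 1, heq 2, heq 3, heq3 0, heq3 1, heq3 2, heq3 3,
      h2 2 1, h2 3 1, h2 3 2, h2 2 0, h2 3 0, h2 1 0,
      swap3 (h2 2 1), swap3 (h2 3 1), swap3 (h2 3 2),
      swap3 (h2 2 0), swap3 (h2 3 0), swap3 (h2 1 0),
      h1 2 1, h1 3 1, h1 3 2, h1 2 0, h1 3 0, h1 1 0,
      swap3 (h1 2 1), swap3 (h1 3 1), swap3 (h1 3 2),
      swap3 (h1 2 0), swap3 (h1 3 0), swap3 (h1 1 0),
      mul_add, add_mul, mul_sub, sub_mul, smul_add, smul_sub, mul_smul_comm]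
    noncomm_ring
end

section
/- Let A be a commutative ℂ-algebra equipped with a ℤ²-grading: a family of ℂ-submodules A_{(n,m)} ((n,m) ∈ ℤ²) such that A is their internal direct sum and A_{(n,m)}·A_{(k,r)} ⊆ A_{(n+k, m+r)}. Fix θ ∈ ℝ, and let ⋆_θ be the unique ℂ-bilinear map A × A → A such that for homogeneous elements f ∈ A_{(n,m)} and h ∈ A_{(k,r)}: f ⋆_θ h = e^{π i θ (n·r − m·k)} · f·h. Then ⋆_θ is associative (and respects the grading: A_{(n,m)} ⋆_θ A_{(k,r)} ⊆ A_{(n+k,m+r)}), so (A, ⋆_θ) is an associative, generally noncommutative, ℂ-algebra. -/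
open DirectSum

section Aux

variable {A : Type*} [CommRing A] [Algebra ℂ A]
    (𝒜 : ℤ × ℤ → Submodule ℂ A) [DirectSum.Decomposition 𝒜] (θ : ℝ)

/-- the phase factor -/
noncomputable def cldC (θ : ℝ) (p q : ℤ × ℤ) : ℂ :=
  Complex.exp (Real.pi * Complex.I * (θ : ℂ) *
    ((p.1 : ℂ) * (q.2 : ℂ) - (p.2 : ℂ) * (q.1 : ℂ)))

noncomputable def cldG (p q : ℤ × ℤ) : 𝒜 p →ₗ[ℂ] 𝒜 q →ₗ[ℂ] A :=
  cldC θ p q • ((LinearMap.mul ℂ A).compl₁₂ (𝒜 p).subtype (𝒜 q).subtype)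

noncomputable def cldF : (⨁ p, 𝒜 p) →ₗ[ℂ] (⨁ q, 𝒜 q) →ₗ[ℂ] A :=
  DirectSum.toModule ℂ _ _ (fun p =>
    (DirectSum.toModule ℂ _ _ (fun q => (cldG 𝒜 θ p q).flip)).flip)

noncomputable def cldS : A →ₗ[ℂ] A →ₗ[ℂ] A :=
  (cldF 𝒜 θ).compl₁₂ (decomposeLinearEquiv 𝒜).toLinearMap
    (decomposeLinearEquiv 𝒜).toLinearMap

theorem cldS_apply (p q : ℤ × ℤ) (x y : A) (hx : x ∈ 𝒜 p) (hy : y ∈ 𝒜 q) :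
    cldS 𝒜 θ x y = cldC θ p q • (x * y) := by
  have hx' : decompose 𝒜 x = DirectSum.of (fun i => 𝒜 i) p ⟨x, hx⟩ :=
    DirectSum.decompose_of_mem 𝒜 hx
  have hy' : decompose 𝒜 y = DirectSum.of (fun i => 𝒜 i) q ⟨y, hy⟩ :=
    DirectSum.decompose_of_mem 𝒜 hy
  simp only [cldS, LinearMap.compl₁₂_apply, LinearEquiv.coe_coe, decomposeLinearEquiv_apply,
    hx', hy', cldF,
    ← DirectSum.lof_eq_of ℂ, DirectSum.toModule_lof, LinearMap.flip_apply, cldG,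
    LinearMap.smul_apply, LinearMap.compl₁₂_apply, Submodule.coe_subtype,
    LinearMap.mul_apply']

end Aux

/-- Connes–Landi θ-deformation: given a commutative ℂ-algebra `A` with a ℤ²-grading by
ℂ-submodules `𝒜 (n,m)` (internal direct sum, multiplicative), and `θ ∈ ℝ`, there is a
unique ℂ-bilinear map `S` with `S f h = e^{πiθ(nr − mk)}·(f·h)` on homogeneous elements
`f ∈ 𝒜 (n,m)`, `h ∈ 𝒜 (k,r)`; and any such `S` is associative and respects the grading,
so `(A, S)` is an associative (generally noncommutative) ℂ-algebra. -/
theorem stmt14 {A : Type*} [CommRing A] [Algebra ℂ A]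
    (𝒜 : ℤ × ℤ → Submodule ℂ A) [DirectSum.Decomposition 𝒜]
    (hmul : ∀ (p q : ℤ × ℤ) (x y : A), x ∈ 𝒜 p → y ∈ 𝒜 q → x * y ∈ 𝒜 (p + q))
    (θ : ℝ) :
    (∃! S : A →ₗ[ℂ] A →ₗ[ℂ] A,
      ∀ (p q : ℤ × ℤ) (x y : A), x ∈ 𝒜 p → y ∈ 𝒜 q →
        S x y = Complex.exp (Real.pi * Complex.I * (θ : ℂ) *
          ((p.1 : ℂ) * (q.2 : ℂ) - (p.2 : ℂ) * (q.1 : ℂ))) • (x * y)) ∧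
    (∀ S : A →ₗ[ℂ] A →ₗ[ℂ] A,
      (∀ (p q : ℤ × ℤ) (x y : A), x ∈ 𝒜 p → y ∈ 𝒜 q →
        S x y = Complex.exp (Real.pi * Complex.I * (θ : ℂ) *
          ((p.1 : ℂ) * (q.2 : ℂ) - (p.2 : ℂ) * (q.1 : ℂ))) • (x * y)) →
      ((∀ x y z : A, S (S x y) z = S x (S y z)) ∧
       (∀ (p q : ℤ × ℤ) (x y : A), x ∈ 𝒜 p → y ∈ 𝒜 q → S x y ∈ 𝒜 (p + q)))) := by
  -- uniqueness helper: two bilinear maps agreeing on homogeneous elements agree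
  have uniq : ∀ S T : A →ₗ[ℂ] A →ₗ[ℂ] A,
      (∀ (p q : ℤ × ℤ) (x y : A), x ∈ 𝒜 p → y ∈ 𝒜 q → S x y = T x y) → S = T := by
    intro S T h
    ext x y
    induction x using DirectSum.Decomposition.inductionOn 𝒜 with
    | zero => simp
    | homogeneous m =>
      induction y using DirectSum.Decomposition.inductionOn 𝒜 with
      | zero => simp
      | homogeneous m' => exact h _ _ _ _ m.2 m'.2
      | add a b ha hb => simp [ha, hb]
    | add a b ha hb => simp [ha, hb]
  have key : ∀ (p q : ℤ × ℤ) (x y : A), x ∈ 𝒜 p → y ∈ 𝒜 q →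
      cldS 𝒜 θ x y = Complex.exp (Real.pi * Complex.I * (θ : ℂ) *
        ((p.1 : ℂ) * (q.2 : ℂ) - (p.2 : ℂ) * (q.1 : ℂ))) • (x * y) := by
    intro p q x y hx hy
    exact cldS_apply 𝒜 θ p q x y hx hy
  constructor
  · exact ⟨cldS 𝒜 θ, key, fun T hT => uniq T (cldS 𝒜 θ)
      (fun p q x y hx hy => by rw [hT p q x y hx hy, key p q x y hx hy])⟩
  · intro S hS
    have grad : ∀ (p q : ℤ × ℤ) (x y : A), x ∈ 𝒜 p → y ∈ 𝒜 q → S x y ∈ 𝒜 (p + q) := by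
      intro p q x y hx hy
      rw [hS p q x y hx hy]
      exact Submodule.smul_mem _ _ (hmul p q x y hx hy)
    have assoc_hom : ∀ (p q r : ℤ × ℤ) (x y z : A), x ∈ 𝒜 p → y ∈ 𝒜 q → z ∈ 𝒜 r →
        S (S x y) z = S x (S y z) := by
      intro p q r x y z hx hy hz
      rw [hS p q x y hx hy, map_smul, LinearMap.smul_apply,
        hS (p + q) r _ z (hmul p q x y hx hy) hz,
        hS q r y z hy hz, map_smul,
        hS p (q + r) x _ hx (hmul q r y z hy hz),
        smul_smul, smul_smul, ← Complex.exp_add, ← Complex.exp_add, mul_assoc]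
      rw [mul_assoc]
      congr 1
      congr 1
      simp only [Prod.fst_add, Prod.snd_add]
      push_cast
      ring
      exact mul_assoc x y z
    refine ⟨?_, grad⟩
    intro x y z
    induction x using DirectSum.Decomposition.inductionOn 𝒜 with
    | zero => simp
    | homogeneous mx =>
      induction y using DirectSum.Decomposition.inductionOn 𝒜 with
      | zero => simp
      | homogeneous my =>
        induction z using DirectSum.Decomposition.inductionOn 𝒜 with
        | zero => simp
        | homogeneous mz =>
          exact assoc_hom _ _ _ _ _ _ mx.2 my.2 mz.2
        | add a b ha hb => simp [ha, hb]
      | add a b ha hb => simp [ha, hb]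
    | add a b ha hb => simp [ha, hb]
end
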